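/- arXiv:2405.01395 — 2 statements merged into one kernel-verified Lean document; each statement's English description precedes it below -/
import Mathlib

section
/- Let C be a d₁ × d₂ complex matrix with singular value decomposition C = V₁ [D; 0] V₂† (d₁ ≥ d₂, D a nonnegative d₂ × d₂ diagonal matrix). Define A = V₁ [[D,0],[0,0]] V₁ᵀ and B = conj(V₂) D V₂†. Then A and B are symmetric, and the symmetric block matrix S = [[A, C],[Cᵀ, B]] satisfies rank(S) = rank(C). -/
open Matrix

/-- Rows of the first unitary are indexed by `Fin d₂ ⊕ Fin e`, i.e. `d₁ = d₂ + e ≥ d₂`. -/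
theorem rank_padded_block_eq_rank {d₂ e : ℕ}
    (V₁ : Matrix (Fin d₂ ⊕ Fin e) (Fin d₂ ⊕ Fin e) ℂ)
    (hV₁ : V₁ ∈ Matrix.unitaryGroup (Fin d₂ ⊕ Fin e) ℂ)
    (V₂ : Matrix (Fin d₂) (Fin d₂) ℂ)
    (hV₂ : V₂ ∈ Matrix.unitaryGroup (Fin d₂) ℂ)
    (d : Fin d₂ → ℝ) (hd : ∀ i, 0 ≤ d i)
    (C : Matrix (Fin d₂ ⊕ Fin e) (Fin d₂) ℂ)
    (hC : C = V₁ * Matrix.fromRows (Matrix.diagonal (fun i => (d i : ℂ))) (0 : Matrix (Fin e) (Fin d₂) ℂ) * V₂ᴴ)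
    (A : Matrix (Fin d₂ ⊕ Fin e) (Fin d₂ ⊕ Fin e) ℂ)
    (hA : A = V₁ * Matrix.fromBlocks (Matrix.diagonal (fun i => (d i : ℂ))) 0 0 0 * V₁ᵀ)
    (B : Matrix (Fin d₂) (Fin d₂) ℂ)
    (hB : B = (V₂ᴴ)ᵀ * Matrix.diagonal (fun i => (d i : ℂ)) * V₂ᴴ) :
    Aᵀ = A ∧ Bᵀ = B ∧ (Matrix.fromBlocks A C Cᵀ B).rank = C.rank := by
  obtain ⟨Dc, hDc⟩ : ∃ Dc : Matrix (Fin d₂) (Fin d₂) ℂ,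
      Dc = Matrix.diagonal (fun i => (d i : ℂ)) := ⟨_, rfl⟩
  rw [← hDc] at hC hA hB
  have hDcT : Dcᵀ = Dc := by rw [hDc]; exact Matrix.diagonal_transpose _
  have hAsym : Aᵀ = A := by
    rw [hA]
    simp only [Matrix.transpose_mul, Matrix.transpose_transpose, Matrix.fromBlocks_transpose,
      Matrix.transpose_zero, hDcT]
    rw [Matrix.mul_assoc]
  have hBsym : Bᵀ = B := by
    rw [hB]
    simp only [Matrix.transpose_mul, Matrix.transpose_transpose, hDcT]
    rw [Matrix.mul_assoc]
  refine ⟨hAsym, hBsym, ?_⟩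
  have h1 : V₁ * V₁ᴴ = 1 := Matrix.mem_unitaryGroup_iff.mp hV₁
  have hdet1 : IsUnit V₁.det := Matrix.isUnit_det_of_right_inverse h1
  have hdet2 : IsUnit (V₂ᴴ).det :=
    Matrix.isUnit_det_of_right_inverse (Matrix.mem_unitaryGroup_iff'.mp hV₂)
  have hdet2T : IsUnit ((V₂ᴴ)ᵀ).det := by rwa [Matrix.det_transpose]
  -- rank C = rank Dc
  have hCrank : C.rank = Dc.rank := by
    rw [hC, Matrix.rank_mul_eq_left_of_isUnit_det _ _ hdet2,
      Matrix.rank_mul_eq_right_of_isUnit_det _ _ hdet1]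
    have key : Matrix.fromRows Dc (0 : Matrix (Fin e) (Fin d₂) ℂ) =
        Matrix.fromRows (1 : Matrix (Fin d₂) (Fin d₂) ℂ) 0 * Dc := by
      rw [Matrix.fromRows_mul, Matrix.one_mul, Matrix.zero_mul]
    apply le_antisymm
    · rw [key]; exact Matrix.rank_mul_le_right _ _
    · have key2 : Dc = Matrix.fromCols (1 : Matrix (Fin d₂) (Fin d₂) ℂ) (0 : Matrix (Fin d₂) (Fin e) ℂ) *
          Matrix.fromRows Dc (0 : Matrix (Fin e) (Fin d₂) ℂ) := by
        rw [Matrix.fromCols_mul_fromRows, Matrix.one_mul, Matrix.zero_mul, add_zero]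
      conv_lhs => rw [key2]
      exact Matrix.rank_mul_le_right _ _
  -- abbreviations (opaque)
  obtain ⟨X, hX⟩ : ∃ X : Matrix (Fin d₂ ⊕ Fin e) (Fin d₂) ℂ,
      X = V₁ * Matrix.fromRows (1 : Matrix (Fin d₂) (Fin d₂) ℂ) (0 : Matrix (Fin e) (Fin d₂) ℂ) := ⟨_, rfl⟩
  obtain ⟨Y, hY⟩ : ∃ Y : Matrix (Fin d₂) (Fin d₂) ℂ, Y = (V₂ᴴ)ᵀ := ⟨_, rfl⟩
  have hXD : X * Dc = V₁ * Matrix.fromRows Dc (0 : Matrix (Fin e) (Fin d₂) ℂ) := by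
    rw [hX, Matrix.mul_assoc, Matrix.fromRows_mul, Matrix.one_mul, Matrix.zero_mul]
  have hmid : Matrix.fromRows Dc (0 : Matrix (Fin e) (Fin d₂) ℂ) *
      Matrix.fromCols (1 : Matrix (Fin d₂) (Fin d₂) ℂ) (0 : Matrix (Fin d₂) (Fin e) ℂ) =
      (Matrix.fromBlocks Dc 0 0 0 : Matrix (Fin d₂ ⊕ Fin e) (Fin d₂ ⊕ Fin e) ℂ) := by
    rw [Matrix.fromRows_mul_fromCols]
    simp
  have hXDXT : X * Dc * Xᵀ = A := by
    rw [hXD, hX, Matrix.transpose_mul, Matrix.transpose_fromRows, Matrix.transpose_one,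
      Matrix.transpose_zero, hA, ← Matrix.mul_assoc,
      Matrix.mul_assoc V₁ (Matrix.fromRows Dc 0), hmid]
  have hXDYT : X * Dc * Yᵀ = C := by
    rw [hXD, hY, Matrix.transpose_transpose, hC]
  have hYDXT : Y * Dc * Xᵀ = Cᵀ := by
    have h := congrArg Matrix.transpose hXDYT
    simp only [Matrix.transpose_mul, Matrix.transpose_transpose, hDcT] at h
    rw [← h, Matrix.mul_assoc]
  have hYDYT : Y * Dc * Yᵀ = B := by
    rw [hY, Matrix.transpose_transpose, hB]
  have hS : Matrix.fromBlocks A C Cᵀ B = Matrix.fromRows X Y * Dc * (Matrix.fromRows X Y)ᵀ := by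
    rw [Matrix.transpose_fromRows, Matrix.fromRows_mul, Matrix.fromRows_mul_fromCols,
      hXDXT, hXDYT, hYDXT, hYDYT]
  have hSrank : (Matrix.fromBlocks A C Cᵀ B).rank = Dc.rank := by
    apply le_antisymm
    · rw [hS]
      exact le_trans (Matrix.rank_mul_le_left _ _) (Matrix.rank_mul_le_right _ _)
    · have hBrank : B.rank = Dc.rank := by
        rw [hB, Matrix.rank_mul_eq_left_of_isUnit_det _ _ hdet2,
          Matrix.rank_mul_eq_right_of_isUnit_det _ _ hdet2T]
      rw [← hBrank]
      have hBsub : B = Matrix.fromCols (0 : Matrix (Fin d₂) (Fin d₂ ⊕ Fin e) ℂ) (1 : Matrix (Fin d₂) (Fin d₂) ℂ) *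
          Matrix.fromBlocks A C Cᵀ B *
          Matrix.fromRows (0 : Matrix (Fin d₂ ⊕ Fin e) (Fin d₂) ℂ) (1 : Matrix (Fin d₂) (Fin d₂) ℂ) := by
        rw [Matrix.mul_assoc, Matrix.fromBlocks_mul_fromRows, Matrix.fromCols_mul_fromRows]
        simp
      conv_lhs => rw [hBsub]
      exact le_trans (Matrix.rank_mul_le_left _ _) (Matrix.rank_mul_le_right _ _)
  rw [hSrank, hCrank]
end

section
/- Post-selected preparability implies the rank condition: if there exist a ∈ ℕ, a unitary U ∈ U(m + a), and α ∈ (0, 1] such that Uᵀ · diag(S_in, 0) · U has its top-left off-diagonal blocks equal to α·C and α·Cᵀ (at the positions of the two-qudit encoding), then 2·rank(C) ≤ 2·rank(S_in), i.e., rank(C) ≤ rank(S_in). -/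
open Matrix

theorem postselected_prep_rank_necessary {d₁ d₂ a : ℕ}
    (Sin : Matrix (Fin d₁ ⊕ Fin d₂) (Fin d₁ ⊕ Fin d₂) ℂ) (hSin : Sinᵀ = Sin)
    (C : Matrix (Fin d₁) (Fin d₂) ℂ)
    (U : Matrix ((Fin d₁ ⊕ Fin d₂) ⊕ Fin a) ((Fin d₁ ⊕ Fin d₂) ⊕ Fin a) ℂ)
    (hU : U ∈ Matrix.unitaryGroup ((Fin d₁ ⊕ Fin d₂) ⊕ Fin a) ℂ)
    (α : ℝ) (hα : α ∈ Set.Ioc (0 : ℝ) 1)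
    (h : ∀ (i : Fin d₁) (j : Fin d₂),
      (Uᵀ * Matrix.fromBlocks Sin 0 0 (0 : Matrix (Fin a) (Fin a) ℂ) * U)
          (Sum.inl (Sum.inl i)) (Sum.inl (Sum.inr j)) = (α : ℂ) * C i j) :
    C.rank ≤ Sin.rank := by
  set M : Matrix ((Fin d₁ ⊕ Fin d₂) ⊕ Fin a) ((Fin d₁ ⊕ Fin d₂) ⊕ Fin a) ℂ :=
    Uᵀ * Matrix.fromBlocks Sin 0 0 (0 : Matrix (Fin a) (Fin a) ℂ) * U with hM
  -- rank of the blown-up matrix equals rank Sin-block matrix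
  have hdetU : IsUnit U.det := Matrix.UnitaryGroup.det_isUnit ⟨U, hU⟩
  have hdetUT : IsUnit Uᵀ.det := by rwa [Matrix.det_transpose]
  have hMrank : M.rank = (Matrix.fromBlocks Sin 0 0 (0 : Matrix (Fin a) (Fin a) ℂ)).rank := by
    rw [hM, Matrix.rank_mul_eq_left_of_isUnit_det U _ hdetU,
      Matrix.rank_mul_eq_right_of_isUnit_det Uᵀ _ hdetUT]
  -- block matrix rank ≤ rank Sin
  have hR : (Matrix.fromBlocks Sin 0 0 (0 : Matrix (Fin a) (Fin a) ℂ)).rank ≤ Sin.rank := by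
    have key : Matrix.fromBlocks Sin 0 0 (0 : Matrix (Fin a) (Fin a) ℂ) =
        ((1 : Matrix ((Fin d₁ ⊕ Fin d₂) ⊕ Fin a) ((Fin d₁ ⊕ Fin d₂) ⊕ Fin a) ℂ).submatrix id Sum.inl) * Sin *
          ((1 : Matrix ((Fin d₁ ⊕ Fin d₂) ⊕ Fin a) ((Fin d₁ ⊕ Fin d₂) ⊕ Fin a) ℂ).submatrix Sum.inl id) := by
      ext p q
      rcases p with p | p <;> rcases q with q | q <;>
        simp [Matrix.mul_apply, Matrix.one_apply, Finset.sum_ite_eq, Finset.sum_ite_eq',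
          Sum.inl.injEq, Matrix.fromBlocks]
    calc (Matrix.fromBlocks Sin 0 0 (0 : Matrix (Fin a) (Fin a) ℂ)).rank
        ≤ (((1 : Matrix ((Fin d₁ ⊕ Fin d₂) ⊕ Fin a) ((Fin d₁ ⊕ Fin d₂) ⊕ Fin a) ℂ).submatrix id Sum.inl) * Sin).rank := by
          rw [key]; exact Matrix.rank_mul_le_left _ _
      _ ≤ Sin.rank := Matrix.rank_mul_le_right _ _
  -- α • C is a submatrix of M, expressed as a product
  have hsub : ((α : ℂ) • C) =
      ((1 : Matrix ((Fin d₁ ⊕ Fin d₂) ⊕ Fin a) ((Fin d₁ ⊕ Fin d₂) ⊕ Fin a) ℂ).submatrix (Sum.inl ∘ Sum.inl) id) * M *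
        ((1 : Matrix ((Fin d₁ ⊕ Fin d₂) ⊕ Fin a) ((Fin d₁ ⊕ Fin d₂) ⊕ Fin a) ℂ).submatrix id (Sum.inl ∘ Sum.inr)) := by
    ext i j
    have := h i j
    simp only [Matrix.mul_apply, Matrix.submatrix_apply, Matrix.one_apply, id_eq,
      Matrix.smul_apply, smul_eq_mul]
    simp only [ite_mul, one_mul, zero_mul, mul_ite, mul_one, mul_zero,
      Finset.sum_ite_eq, Finset.sum_ite_eq', Finset.mem_univ, if_true]
    exact this.symm
  have hCrank : C.rank = ((α : ℂ) • C).rank := by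
    have hα0 : (α : ℂ) ≠ 0 := by
      exact_mod_cast ne_of_gt hα.1
    have : ((α : ℂ) • C) = ((α : ℂ) • (1 : Matrix (Fin d₁) (Fin d₁) ℂ)) * C := by
      rw [Matrix.smul_mul, Matrix.one_mul]
    rw [this, Matrix.rank_mul_eq_right_of_isUnit_det]
    simpa [Matrix.det_smul] using (isUnit_iff_ne_zero.mpr (pow_ne_zero _ hα0))
  calc C.rank = ((α : ℂ) • C).rank := hCrank
    _ ≤ M.rank := by
        rw [hsub]
        exact le_trans (Matrix.rank_mul_le_left _ _) (Matrix.rank_mul_le_right _ _)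
    _ ≤ Sin.rank := by rw [hMrank]; exact hR
end
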